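/- (Proposition 1.) Let Y ⊆ ℝⁿ be a closed robustly positive invariant set for the difference inclusion z⁺ ∈ H(z,w) with disturbances in a compact set W ⊆ ℝ^{nw} containing 0, and suppose V : ℝⁿ → [0,∞) is a continuous ISS Lyapunov function on Y: there exist class-K∞ functions α₁, α₂, α₃ and a class-K function σ such that α₁(‖z‖) ≤ V(z) ≤ α₂(‖z‖) and sup over z⁺ ∈ H(z,w) of V(z⁺) is at most V(z) − α₃(‖z‖) + σ(‖w‖), for all z ∈ Y and w ∈ W. Then the origin is robustly asymptotically stable in Y: there exist β of class KL and γ of class K such that every solution ψ of the inclusion from any z ∈ Y under any disturbance sequence 𝐰 with values in W satisfies ‖ψ(k)‖ ≤ β(‖z‖, k) + γ(‖𝐰‖) for all k ∈ ℕ. -/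

import Mathlib

open scoped Classical Pointwise
open Filter

noncomputable section

/-- `Vec n` is `ℝ^n` with the Euclidean norm. -/
abbrev Vec (n : ℕ) : Type := EuclideanSpace ℝ (Fin n)

/-- A function `σ : [0,∞) → [0,∞)` is of class K if it is continuous,
strictly increasing and `σ 0 = 0`. -/
def ClassK (σ : ℝ → ℝ) : Prop :=
  ContinuousOn σ (Set.Ici 0) ∧ StrictMonoOn σ (Set.Ici 0) ∧ σ 0 = 0

/-- Class K∞: class K and unbounded. -/
def ClassKInf (σ : ℝ → ℝ) : Prop :=
  ClassK σ ∧ Tendsto σ atTop atTop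

/-- Class KL function `β : [0,∞) × ℕ → [0,∞)`. -/
def ClassKL (β : ℝ → ℕ → ℝ) : Prop :=
  (∀ k, ClassK fun s => β s k) ∧
    ∀ s, 0 ≤ s → Antitone (fun k => β s k) ∧ Tendsto (fun k => β s k) atTop (nhds 0)

lemma ClassK.nonneg {f : ℝ → ℝ} (hf : ClassK f) {x : ℝ} (hx : 0 ≤ x) : 0 ≤ f x := by
  rcases eq_or_lt_of_le hx with h | h
  · rw [← h, hf.2.2]
  · rw [← hf.2.2]; exact le_of_lt (hf.2.1 Set.self_mem_Ici (Set.mem_Ici.mpr (le_of_lt h)) h)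

lemma ClassKInf.comp {f g : ℝ → ℝ} (hf : ClassKInf f) (hg : ClassKInf g) :
    ClassKInf (fun x => f (g x)) := by
  refine ⟨⟨?_, ?_, ?_⟩, hf.2.comp hg.2⟩
  · exact hf.1.1.comp hg.1.1 (fun x hx => Set.mem_Ici.mpr (hg.1.nonneg hx))
  · intro a ha b hb hab
    exact hf.1.2.1 (Set.mem_Ici.mpr (hg.1.nonneg ha)) (Set.mem_Ici.mpr (hg.1.nonneg hb))
      (hg.1.2.1 ha hb hab)
  · show f (g 0) = 0
    rw [hg.1.2.2, hf.1.2.2]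

lemma classKInf_inv {f : ℝ → ℝ} (hf : ClassKInf f) :
    ∃ g : ℝ → ℝ, ClassKInf g ∧ (∀ x, 0 ≤ x → g (f x) = x) ∧
      (∀ y, 0 ≤ y → f (g y) = y) ∧ (∀ y, 0 ≤ y → 0 ≤ g y) := by
  obtain ⟨⟨hcont, hmono, hf0⟩, htop⟩ := hf
  have hK : ClassK f := ⟨hcont, hmono, hf0⟩
  have hmapsTo : ∀ x : Set.Ici (0:ℝ), f x ∈ Set.Ici (0:ℝ) := fun x => hK.nonneg x.2
  set F : Set.Ici (0:ℝ) → Set.Ici (0:ℝ) := fun x => ⟨f x, hmapsTo x⟩ with hF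
  have hFmono : StrictMono F := fun a b hab => hmono a.2 b.2 hab
  have hFsurj : Function.Surjective F := by
    rintro ⟨y, hy⟩
    obtain ⟨x, hx⟩ := ((htop.eventually_ge_atTop y).and (eventually_ge_atTop 0)).exists
    have : y ∈ Set.Icc (f 0) (f x) := ⟨by rw [hf0]; exact hy, hx.1⟩
    obtain ⟨x', hx', hfx'⟩ := intermediate_value_Icc hx.2 (hcont.mono (Set.Icc_subset_Ici_self)) this
    exact ⟨⟨x', hx'.1⟩, Subtype.ext hfx'⟩
  set e := StrictMono.orderIsoOfSurjective F hFmono hFsurj with he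
  have heF : ∀ x, e x = F x := fun x => by
    rw [he, StrictMono.coe_orderIsoOfSurjective]
  set g : ℝ → ℝ := fun y => if h : 0 ≤ y then ((e.symm ⟨y, h⟩ : Set.Ici (0:ℝ)) : ℝ) else y with hg
  have hgval : ∀ y (hy : 0 ≤ y), g y = ((e.symm ⟨y, hy⟩ : Set.Ici (0:ℝ)) : ℝ) := by
    intro y hy; simp [hg, hy]
  have hgnn : ∀ y, 0 ≤ y → 0 ≤ g y := by
    intro y hy; rw [hgval y hy]; exact (e.symm ⟨y, hy⟩).2
  have hfg : ∀ y, 0 ≤ y → f (g y) = y := by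
    intro y hy
    rw [hgval y hy]
    have := e.apply_symm_apply ⟨y, hy⟩
    rw [heF] at this
    exact congrArg Subtype.val this
  have hgf : ∀ x, 0 ≤ x → g (f x) = x := by
    intro x hx
    have h1 : (0:ℝ) ≤ f x := hK.nonneg hx
    rw [hgval _ h1]
    have : e ⟨x, hx⟩ = ⟨f x, h1⟩ := by rw [heF]
    rw [← this, e.symm_apply_apply]
  have hgmono : StrictMonoOn g (Set.Ici 0) := by
    intro a ha b hb hab
    rw [hgval a ha, hgval b hb]
    exact e.symm.strictMono (Subtype.mk_lt_mk.mpr hab)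
  have hg0 : g 0 = 0 := by
    have h1 := hfg 0 le_rfl
    have h2 : f (g 0) = f 0 := by rw [h1, hf0]
    exact hmono.injOn (Set.mem_Ici.mpr (hgnn 0 le_rfl)) (Set.mem_Ici.mpr le_rfl) h2
  have hgcont : ContinuousOn g (Set.Ici 0) := by
    rw [continuousOn_iff_continuous_restrict]
    have : Set.domRestrict (Set.Ici (0:ℝ)) g = fun y => ((e.symm y : Set.Ici (0:ℝ)) : ℝ) := by
      funext y; exact hgval y y.2
    rw [this]
    exact continuous_subtype_val.comp e.symm.continuous
  have hgtop : Tendsto g atTop atTop := by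
    rw [tendsto_atTop_atTop]
    intro b
    refine ⟨f (max b 0), fun a ha => ?_⟩
    have h1 : (0:ℝ) ≤ f (max b 0) := hK.nonneg (le_max_right _ _)
    have := hgmono.monotoneOn (Set.mem_Ici.mpr h1) (Set.mem_Ici.mpr (h1.trans ha)) ha
    rw [hgf _ (le_max_right _ _)] at this
    exact (le_max_left b 0).trans this
  exact ⟨g, ⟨⟨hgcont, hgmono, hg0⟩, hgtop⟩, hgf, hfg, hgnn⟩

lemma envelope {ρ : ℝ → ℝ} (hρ : ClassK ρ) :
    ∃ G : ℝ → ℝ, Continuous G ∧ StrictMono G ∧ G 0 = 0 ∧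
      (∀ r, G r ≤ r) ∧ (∀ r, 0 < r → G r < r) ∧
      (∀ r, 0 ≤ r → r - ρ r / 2 ≤ G r) ∧ (∀ r, 0 ≤ r → 0 ≤ G r) := by
  set g : ℝ → ℝ := fun t => t - ρ t / 2 with hgdef
  set A : ℝ → Set ℝ := fun r => (fun t => g t - max (t - r) 0) '' Set.Ici 0 with hAdef
  set gh : ℝ → ℝ := fun r => sSup (A r) with hghdef
  have hmemA : ∀ r t, 0 ≤ t → g t - max (t - r) 0 ∈ A r := by
    intro r t ht; exact ⟨t, Set.mem_Ici.mpr ht, rfl⟩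
  have hne : ∀ r, (A r).Nonempty := fun r => ⟨_, hmemA r 0 le_rfl⟩
  have helem : ∀ r, ∀ y ∈ A r, y ≤ r := by
    rintro r y ⟨t, ht, rfl⟩
    have ht' : (0:ℝ) ≤ t := ht
    have hρt : 0 ≤ ρ t := hρ.nonneg ht'
    show g t - max (t - r) 0 ≤ r
    rcases le_or_gt t r with h | h
    · have h1 : g t ≤ t := by simp only [hgdef]; linarith
      have h2 : (0:ℝ) ≤ max (t - r) 0 := le_max_right _ _
      linarith
    · have h3 : max (t - r) 0 = t - r := max_eq_left (by linarith)
      simp only [h3, hgdef]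
      linarith
  have hbdd : ∀ r, BddAbove (A r) := fun r => ⟨r, helem r⟩
  have hle : ∀ r, gh r ≤ r := fun r => csSup_le (hne r) (helem r)
  have hge_g : ∀ r, 0 ≤ r → g r ≤ gh r := by
    intro r hr
    have := le_csSup (hbdd r) (hmemA r r hr)
    simpa using this
  have hρ0 : ρ 0 = 0 := hρ.2.2
  have hg0 : g 0 = 0 := by simp [hgdef, hρ0]
  have hge0 : ∀ r, 0 ≤ r → 0 ≤ gh r := by
    intro r hr
    have := le_csSup (hbdd r) (hmemA r 0 le_rfl)
    rw [hg0] at this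
    have h2 : max (0 - r) 0 = 0 := max_eq_right (by linarith)
    rw [h2] at this
    simpa using this
  have hmono : Monotone gh := by
    intro a b hab
    refine csSup_le (hne a) ?_
    rintro y ⟨t, ht, rfl⟩
    have ht' : (0:ℝ) ≤ t := ht
    refine le_trans ?_ (le_csSup (hbdd b) (hmemA b t ht'))
    have : max (t - b) 0 ≤ max (t - a) 0 := max_le_max (by linarith) le_rfl
    show g t - max (t - a) 0 ≤ g t - max (t - b) 0
    linarith
  have hlip : ∀ a b, a ≤ b → gh b ≤ gh a + (b - a) := by
    intro a b hab
    refine csSup_le (hne b) ?_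
    rintro y ⟨t, ht, rfl⟩
    have ht' : (0:ℝ) ≤ t := ht
    have h1 : g t - max (t - a) 0 ≤ gh a := le_csSup (hbdd a) (hmemA a t ht')
    have h2 : max (t - a) 0 ≤ max (t - b) 0 + (b - a) := by
      rcases le_total (t - a) 0 with h | h
      · have h3 : max (t - a) 0 = 0 := max_eq_right h
        have h4 : (0:ℝ) ≤ max (t - b) 0 := le_max_right _ _
        rw [h3]; linarith
      · calc max (t - a) 0 = t - a := max_eq_left h
          _ = (t - b) + (b - a) := by ring
          _ ≤ max (t - b) 0 + (b - a) := by gcongr; exact le_max_left _ _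
    show g t - max (t - b) 0 ≤ gh a + (b - a)
    linarith
  have hcont : Continuous gh := by
    have hl : LipschitzWith 1 gh := by
      refine LipschitzWith.of_dist_le_mul ?_
      intro a b
      rw [Real.dist_eq, Real.dist_eq, NNReal.coe_one, one_mul, abs_le]
      rcases le_total a b with h | h
      · have h1 := hmono h
        have h2 := hlip a b h
        have hab : |a - b| = b - a := by rw [abs_sub_comm]; exact abs_of_nonneg (by linarith)
        rw [hab]
        constructor <;> linarith
      · have h1 := hmono h
        have h2 := hlip b a h
        have hab : |a - b| = a - b := abs_of_nonneg (by linarith)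
        rw [hab]
        constructor <;> linarith
    exact hl.continuous
  have hlt : ∀ r, 0 < r → gh r < r := by
    intro r hr
    set m : ℝ := min (r/2) (ρ (r/2) / 2) with hm
    have hr2 : (0:ℝ) ≤ r/2 := by linarith
    have hρr2 : 0 < ρ (r/2) := by
      rw [← hρ0]
      exact hρ.2.1 Set.self_mem_Ici (Set.mem_Ici.mpr hr2) (by linarith)
    have hmpos : 0 < m := lt_min (by linarith) (by linarith)
    have hbound : gh r ≤ r - m := by
      refine csSup_le (hne r) ?_
      rintro y ⟨t, ht, rfl⟩
      have ht' : (0:ℝ) ≤ t := ht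
      have hρt : 0 ≤ ρ t := hρ.nonneg ht'
      show g t - max (t - r) 0 ≤ r - m
      rcases le_or_gt t (r/2) with h | h
      · have h1 : g t ≤ t := by simp only [hgdef]; linarith
        have h2 : (0:ℝ) ≤ max (t - r) 0 := le_max_right _ _
        have h3 : m ≤ r / 2 := min_le_left _ _
        linarith
      · have hρmono : ρ (r/2) ≤ ρ t :=
          hρ.2.1.monotoneOn (Set.mem_Ici.mpr hr2) (Set.mem_Ici.mpr ht') (le_of_lt h)
        have hmle : m ≤ ρ (r/2) / 2 := min_le_right _ _
        rcases le_or_gt t r with h' | h'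
        · have h2 : (0:ℝ) ≤ max (t - r) 0 := le_max_right _ _
          simp only [hgdef]
          linarith
        · have h3 : max (t - r) 0 = t - r := max_eq_left (by linarith)
          simp only [h3, hgdef]
          linarith
    linarith
  have gh0 : gh 0 = 0 := le_antisymm (hle 0) (hge0 0 le_rfl)
  refine ⟨fun r => (gh r + r) / 2, (hcont.add continuous_id).div_const 2, ?_, by simp [gh0],
    ?_, ?_, ?_, ?_⟩
  · intro a b hab
    have := hmono (le_of_lt hab)
    simp only
    linarith
  · intro r; have := hle r; simp only; linarith
  · intro r hr; have := hlt r hr; simp only; linarith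
  · intro r hr
    have h1 := hge_g r hr
    have h2 : r - ρ r / 2 ≤ r := by have := hρ.nonneg hr; linarith
    simp only [hgdef] at h1
    simp only
    linarith
  · intro r hr; have := hge0 r hr; simp only; linarith

/-- Proposition 1: a continuous ISS Lyapunov function on a closed robustly positive
invariant set implies robust asymptotic stability of the origin. -/
theorem ISS_Lyapunov_implies_robust_asymptotic_stability
    {n nw : ℕ}
    (H : Vec n → Vec nw → Set (Vec n))
    (W : Set (Vec nw)) (hWc : IsCompact W) (hW0 : (0 : Vec nw) ∈ W)
    (Y : Set (Vec n)) (hYclosed : IsClosed Y)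
    (hRPI : ∀ z ∈ Y, ∀ w ∈ W, H z w ⊆ Y)
    (V : Vec n → ℝ) (hVc : Continuous V) (hVnn : ∀ z, 0 ≤ V z)
    (α₁ α₂ α₃ σ : ℝ → ℝ)
    (h₁ : ClassKInf α₁) (h₂ : ClassKInf α₂) (h₃ : ClassKInf α₃) (hσ : ClassK σ)
    (hbd : ∀ z ∈ Y, α₁ ‖z‖ ≤ V z ∧ V z ≤ α₂ ‖z‖)
    (hdec : ∀ z ∈ Y, ∀ w ∈ W, ∀ zp ∈ H z w, V zp ≤ V z - α₃ ‖z‖ + σ ‖w‖) :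
    ∃ β γ, ClassKL β ∧ ClassK γ ∧
      ∀ z ∈ Y, ∀ wseq : ℕ → Vec nw, (∀ i, wseq i ∈ W) →
        ∀ ψ : ℕ → Vec n, ψ 0 = z → (∀ k, ψ (k + 1) ∈ H (ψ k) (wseq k)) →
          ∀ k, ‖ψ k‖ ≤ β ‖z‖ k + γ (⨆ i, ‖wseq i‖) := by
  obtain ⟨α₂inv, hα₂inv, hα₂gf, hα₂fg, hα₂nn⟩ := classKInf_inv h₂
  obtain ⟨α₁inv, hα₁inv, hα₁gf, hα₁fg, hα₁nn⟩ := classKInf_inv h₁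
  have hρ : ClassKInf (fun r => α₃ (α₂inv r)) := h₃.comp hα₂inv
  set ρ : ℝ → ℝ := fun r => α₃ (α₂inv r) with hρdef
  obtain ⟨ρinv, hρinv, hρgf, hρfg, hρnn⟩ := classKInf_inv hρ
  obtain ⟨G, hGc, hGsm, hG0, hGle, hGlt, hGgeg, hGnn⟩ := envelope hρ.1
  have hGiter0 : ∀ k, G^[k] 0 = 0 := fun k => Function.iterate_fixed hG0 k
  have hGiternn : ∀ k x, 0 ≤ x → 0 ≤ G^[k] x := by
    intro k x hx
    have := (hGsm.monotone.iterate k) hx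
    rwa [hGiter0 k] at this
  set β : ℝ → ℕ → ℝ := fun r k => α₁inv (G^[k] (α₂ r)) with hβdef
  set γ : ℝ → ℝ := fun s => α₁inv (ρinv (2 * σ s) + σ s) with hγdef
  have hα₁inv0 : α₁inv 0 = 0 := hα₁inv.1.2.2
  refine ⟨β, γ, ⟨?_, ?_⟩, ?_, ?_⟩
  · -- each section of β is class K
    intro k
    have hc1 : ContinuousOn (fun r => G^[k] (α₂ r)) (Set.Ici 0) :=
      (hGc.iterate k).comp_continuousOn h₂.1.1
    refine ⟨?_, ?_, ?_⟩
    · exact hα₁inv.1.1.comp hc1 (fun r hr => Set.mem_Ici.mpr (hGiternn k _ (h₂.1.nonneg hr)))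
    · intro a ha b hb hab
      have h1 : α₂ a < α₂ b := h₂.1.2.1 ha hb hab
      have h2 : G^[k] (α₂ a) < G^[k] (α₂ b) := (hGsm.iterate k) h1
      exact hα₁inv.1.2.1 (Set.mem_Ici.mpr (hGiternn k _ (h₂.1.nonneg ha)))
        (Set.mem_Ici.mpr (hGiternn k _ (h₂.1.nonneg hb))) h2
    · show α₁inv (G^[k] (α₂ 0)) = 0
      rw [h₂.1.2.2, hGiter0 k, hα₁inv0]
  · -- KL in k
    intro s hs
    set a : ℕ → ℝ := fun k => G^[k] (α₂ s) with hadef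
    have hann : ∀ k, 0 ≤ a k := fun k => hGiternn k _ (h₂.1.nonneg hs)
    have hastep : ∀ k, a (k + 1) = G (a k) := fun k => Function.iterate_succ_apply' G k _
    have haanti : Antitone a := by
      refine antitone_nat_of_succ_le (fun k => ?_)
      rw [hastep k]
      exact hGle (a k)
    have hbb : BddBelow (Set.range a) := ⟨0, by rintro _ ⟨k, rfl⟩; exact hann k⟩
    have htend : Tendsto a atTop (nhds (⨅ k, a k)) := tendsto_atTop_ciInf haanti hbb
    set L : ℝ := ⨅ k, a k with hLdef
    have hL0 : 0 ≤ L := le_ciInf hann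
    have hfix : G L = L := by
      have h1 : Tendsto (fun k => a (k + 1)) atTop (nhds L) :=
        htend.comp (tendsto_add_atTop_nat 1)
      have h2 : Tendsto (fun k => G (a k)) atTop (nhds (G L)) :=
        (hGc.tendsto L).comp htend
      have h3 : (fun k => a (k + 1)) = fun k => G (a k) := funext hastep
      rw [h3] at h1
      exact tendsto_nhds_unique h2 h1
    have hLzero : L = 0 := by
      by_contra hne
      have hLpos : 0 < L := lt_of_le_of_ne hL0 (Ne.symm hne)
      exact absurd hfix (ne_of_lt (hGlt L hLpos))
    rw [hLzero] at htend
    constructor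
    · refine antitone_nat_of_succ_le (fun k => ?_)
      show α₁inv (a (k + 1)) ≤ α₁inv (a k)
      refine hα₁inv.1.2.1.monotoneOn (Set.mem_Ici.mpr (hann (k+1))) (Set.mem_Ici.mpr (hann k)) ?_
      rw [hastep k]; exact hGle (a k)
    · have hcw : ContinuousWithinAt α₁inv (Set.Ici 0) 0 := hα₁inv.1.1 0 Set.self_mem_Ici
      have h4 : Tendsto a atTop (nhdsWithin 0 (Set.Ici 0)) := by
        rw [tendsto_nhdsWithin_iff]
        exact ⟨htend, Eventually.of_forall (fun k => Set.mem_Ici.mpr (hann k))⟩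
      have := hcw.tendsto.comp h4
      rwa [hα₁inv0] at this
  · -- γ class K
    have hσmono := hσ.2.1
    refine ⟨?_, ?_, ?_⟩
    · have hc1 : ContinuousOn (fun s => ρinv (2 * σ s)) (Set.Ici 0) := by
        refine hρinv.1.1.comp (continuousOn_const.mul hσ.1) ?_
        intro s hs
        have := hσ.nonneg (Set.mem_Ici.mp hs)
        simp only [Set.mem_Ici]
        linarith
      refine hα₁inv.1.1.comp (hc1.add hσ.1) ?_
      intro s hs
      have h1 := hσ.nonneg (Set.mem_Ici.mp hs)
      have h2 := hρnn (2 * σ s) (by linarith)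
      simp only [Set.mem_Ici]
      linarith
    · intro p hp q hq hpq
      have h1 : σ p < σ q := hσ.2.1 hp hq hpq
      have h2 : 0 ≤ σ p := hσ.nonneg (Set.mem_Ici.mp hp)
      have h3 : ρinv (2 * σ p) < ρinv (2 * σ q) :=
        hρinv.1.2.1 (Set.mem_Ici.mpr (by linarith)) (Set.mem_Ici.mpr (by linarith)) (by linarith)
      have h4 : 0 ≤ ρinv (2 * σ p) := hρnn _ (by linarith)
      refine hα₁inv.1.2.1 (Set.mem_Ici.mpr (by linarith)) (Set.mem_Ici.mpr ?_) (by linarith)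
      have h5 : 0 ≤ ρinv (2 * σ q) := hρnn _ (by linarith)
      linarith
    · show α₁inv (ρinv (2 * σ 0) + σ 0) = 0
      rw [hσ.2.2]
      norm_num
      rw [hρinv.1.2.2, hα₁inv0]
  · -- main estimate
    intro z hz wseq hw ψ hψ0 hstep k
    obtain ⟨C, hC⟩ := hWc.isBounded.exists_norm_le
    have hbddS : BddAbove (Set.range fun i => ‖wseq i‖) := by
      refine ⟨C, ?_⟩; rintro _ ⟨i, rfl⟩; exact hC _ (hw i)
    set S : ℝ := ⨆ i, ‖wseq i‖ with hSdef
    have hSk : ∀ j, ‖wseq j‖ ≤ S := fun j => le_ciSup hbddS j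
    have hS0 : 0 ≤ S := le_trans (norm_nonneg _) (hSk 0)
    have hσS : 0 ≤ σ S := hσ.nonneg hS0
    have hψY : ∀ j, ψ j ∈ Y := by
      intro j
      induction j with
      | zero => rw [hψ0]; exact hz
      | succ j ih => exact hRPI _ ih _ (hw j) (hstep j)
    have key : ∀ j, V (ψ (j + 1)) ≤ V (ψ j) - ρ (V (ψ j)) + σ S := by
      intro j
      have h0 := hdec (ψ j) (hψY j) (wseq j) (hw j) (ψ (j + 1)) (hstep j)
      have hb := hbd (ψ j) (hψY j)
      have hρle : ρ (V (ψ j)) ≤ α₃ ‖ψ j‖ := by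
        have h1 : α₂inv (V (ψ j)) ≤ ‖ψ j‖ := by
          have h2 := hα₂inv.1.2.1.monotoneOn (Set.mem_Ici.mpr (hVnn _))
            (Set.mem_Ici.mpr (h₂.1.nonneg (norm_nonneg (ψ j)))) hb.2
          rwa [hα₂gf _ (norm_nonneg _)] at h2
        exact h₃.1.2.1.monotoneOn (Set.mem_Ici.mpr (hα₂nn _ (hVnn _)))
          (Set.mem_Ici.mpr (norm_nonneg _)) h1
      have hσle : σ ‖wseq j‖ ≤ σ S :=
        hσ.2.1.monotoneOn (Set.mem_Ici.mpr (norm_nonneg _)) (Set.mem_Ici.mpr hS0) (hSk j)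
      linarith
    set c : ℝ := ρinv (2 * σ S) + σ S with hcdef
    have hρinvnn : 0 ≤ ρinv (2 * σ S) := hρnn _ (by linarith)
    have hcnn : 0 ≤ c := by rw [hcdef]; linarith
    have main : ∀ j, V (ψ j) ≤ max (G^[j] (V z)) c := by
      intro j
      induction j with
      | zero =>
        rw [hψ0, Function.iterate_zero_apply]
        exact le_max_left _ _
      | succ j ih =>
        have hk := key j
        have hVnnj : 0 ≤ V (ψ j) := hVnn _
        have hρVnn : 0 ≤ ρ (V (ψ j)) := hρ.1.nonneg hVnnj
        rcases le_or_gt (V (ψ j)) c with hcle | hcgt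
        · refine le_max_of_le_right ?_
          rcases le_or_gt (2 * σ S) (ρ (V (ψ j))) with h | h
          · linarith
          · have h2 : V (ψ j) ≤ ρinv (2 * σ S) := by
              have h3 := hρinv.1.2.1.monotoneOn (Set.mem_Ici.mpr hρVnn)
                (Set.mem_Ici.mpr (by linarith : (0:ℝ) ≤ 2 * σ S)) (le_of_lt h)
              rwa [hρgf _ hVnnj] at h3
            rw [hcdef]; linarith
        · have hVk : V (ψ j) ≤ G^[j] (V z) := by
            rcases le_max_iff.mp ih with h | h
            · exact h
            · exact absurd h (not_le.mpr hcgt)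
          have h2 : 2 * σ S ≤ ρ (V (ψ j)) := by
            have h3 : ρinv (2 * σ S) ≤ V (ψ j) := by rw [hcdef] at hcgt; linarith
            have h4 := hρ.1.2.1.monotoneOn (Set.mem_Ici.mpr hρinvnn)
              (Set.mem_Ici.mpr hVnnj) h3
            rwa [hρfg _ (by linarith : (0:ℝ) ≤ 2 * σ S)] at h4
          have hGb : V (ψ j) - ρ (V (ψ j)) / 2 ≤ G (V (ψ j)) := hGgeg _ hVnnj
          have h5 : G (V (ψ j)) ≤ G (G^[j] (V z)) := hGsm.monotone hVk
          refine le_max_of_le_left ?_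
          rw [Function.iterate_succ_apply' G j (V z)]
          linarith
    have h1 : α₁ ‖ψ k‖ ≤ V (ψ k) := (hbd _ (hψY k)).1
    have h2 : ‖ψ k‖ ≤ α₁inv (V (ψ k)) := by
      have h3 := hα₁inv.1.2.1.monotoneOn (Set.mem_Ici.mpr (h₁.1.nonneg (norm_nonneg (ψ k))))
        (Set.mem_Ici.mpr (hVnn _)) h1
      rwa [hα₁gf _ (norm_nonneg _)] at h3
    set a : ℝ := G^[k] (α₂ ‖z‖) with hadef
    have hann : 0 ≤ a := hGiternn k _ (h₂.1.nonneg (norm_nonneg z))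
    have h3 : V (ψ k) ≤ max a c := by
      have h4 : G^[k] (V z) ≤ a := (hGsm.monotone.iterate k) (hbd z hz).2
      exact le_trans (main k) (max_le_max h4 le_rfl)
    have h5 : α₁inv (V (ψ k)) ≤ α₁inv (max a c) := by
      refine hα₁inv.1.2.1.monotoneOn (Set.mem_Ici.mpr (hVnn _)) (Set.mem_Ici.mpr ?_) h3
      exact le_trans hann (le_max_left _ _)
    have h6 : α₁inv (max a c) ≤ α₁inv a + α₁inv c := by
      rcases max_cases a c with ⟨heq, _⟩ | ⟨heq, _⟩
      · rw [heq]
        have := hα₁nn c hcnn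
        linarith
      · rw [heq]
        have := hα₁nn a hann
        linarith
    have hβeq : β ‖z‖ k = α₁inv a := rfl
    have hγeq : γ S = α₁inv c := rfl
    rw [hβeq, hγeq] at *
    calc ‖ψ k‖ ≤ α₁inv (V (ψ k)) := h2
      _ ≤ α₁inv (max a c) := h5
      _ ≤ α₁inv a + α₁inv c := h6
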